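/- In two-way r-bootstrap percolation on the d-dimensional torus (2 ≤ r ≤ d), the even-part of an r-dimensional hyper-square is a b-eternal set: if all nodes of the even-part are black in some configuration C_t, then in every subsequent configuration at least one node is black. More precisely, for all t' ≥ 0, the even-part is fully black in configuration C_{t+2t'} and the odd-part is fully black in configuration C_{t+2t'+1}. -/

import Mathlib

open scoped Classical ENNReal
open MeasureTheory Filter

/-- Vertices of the `d`-dimensional torus with side length `L`. -/
abbrev TorusV (d L : ℕ) := Fin d → ZMod L

/-- The `d`-dimensional torus graph `T_L^d`: two nodes are adjacent iff they differ
by `±1 (mod L)` in exactly one coordinate. -/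
def torusGraph (d L : ℕ) : SimpleGraph (TorusV d L) where
  Adj v u := v ≠ u ∧ ∃ j, (u j = v j + 1 ∨ u j = v j - 1) ∧ ∀ k, k ≠ j → u k = v k
  symm := ⟨by
    rintro v u ⟨hne, j, hj, hk⟩
    refine ⟨hne.symm, j, ?_, fun k hkj => (hk k hkj).symm⟩
    rcases hj with h | h
    · right; rw [h]; ring
    · left; rw [h]; ring⟩
  loopless := ⟨by rintro v ⟨hne, -⟩; exact hne rfl⟩

/-- One round of two-way `r`-bootstrap percolation on a finite graph:
a node is black in the next round iff it has at least `r` black neighbors. -/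
noncomputable def gStep {V : Type*} [Fintype V] (G : SimpleGraph V) (r : ℕ)
    (C : V → Bool) : V → Bool :=
  fun v => decide (r ≤ (Finset.univ.filter (fun u => G.Adj v u ∧ C u = true)).card)

/-- One round of (ordinary) `r`-bootstrap percolation: black nodes stay black, and a white
node becomes black iff it has at least `r` black neighbors. -/
noncomputable def bpStep {V : Type*} [Fintype V] (G : SimpleGraph V) (r : ℕ)
    (C : V → Bool) : V → Bool :=
  fun v => C v || decide (r ≤ (Finset.univ.filter (fun u => G.Adj v u ∧ C u = true)).card)

/-- One round of the majority model: each node adopts the most frequent color among its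
neighbors, keeping its own color in case of a tie. -/
noncomputable def majStep {V : Type*} [Fintype V] (G : SimpleGraph V)
    (C : V → Bool) : V → Bool :=
  fun v =>
    let b := (Finset.univ.filter (fun u => G.Adj v u ∧ C u = true)).card
    let w := (Finset.univ.filter (fun u => G.Adj v u ∧ C u = false)).card
    if w < b then true else if b < w then false else C v

/-- `S` is an `(r,c)`-robust set in two-way `r`-BP: whenever all nodes of `S` have color `c`,
they keep color `c` in all subsequent configurations. (`true` = black, `false` = white.) -/
noncomputable def isRobust {V : Type*} [Fintype V] (G : SimpleGraph V) (r : ℕ) (c : Bool)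
    (S : Finset V) : Prop :=
  ∀ C : V → Bool, (∀ v ∈ S, C v = c) → ∀ t, ∀ v ∈ S, (gStep G r)^[t] C v = c

/-- `S` is a b-eternal set in two-way `r`-BP: whenever all nodes of `S` are black, every
subsequent configuration contains at least one black node. -/
noncomputable def isBEternal {V : Type*} [Fintype V] (G : SimpleGraph V) (r : ℕ)
    (S : Finset V) : Prop :=
  ∀ C : V → Bool, (∀ v ∈ S, C v = true) → ∀ t, ∃ v, (gStep G r)^[t] C v = true

/-- The node of a hyper-square at start `i` obtained by incrementing the coordinates in `S`. -/
def hsNode {d L : ℕ} (i : TorusV d L) (S : Finset (Fin d)) : TorusV d L :=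
  fun j => if j ∈ S then i j + 1 else i j

/-- The hyper-square with starting node `i` and coordinate set `J` (an `J.card`-dimensional
hyper-square). -/
noncomputable def hyperSquare {d L : ℕ} (i : TorusV d L) (J : Finset (Fin d)) :
    Finset (TorusV d L) :=
  J.powerset.image (hsNode i)

/-- The even-part of the hyper-square: nodes differing from the start in an even number of
coordinates. -/
noncomputable def evenPart {d L : ℕ} (i : TorusV d L) (J : Finset (Fin d)) :
    Finset (TorusV d L) :=
  (J.powerset.filter (fun S => Even S.card)).image (hsNode i)

/-- The odd-part of the hyper-square: nodes differing from the start in an odd number of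
coordinates. -/
noncomputable def oddPart {d L : ℕ} (i : TorusV d L) (J : Finset (Fin d)) :
    Finset (TorusV d L) :=
  (J.powerset.filter (fun S => Odd S.card)).image (hsNode i)

/-- The hyper-rectangle of size `l 0 × ⋯ × l (d-1)` starting at node `i`. -/
noncomputable def hyperRect {d L : ℕ} [NeZero L] (i : TorusV d L) (l : Fin d → ℕ) :
    Finset (TorusV d L) :=
  Finset.univ.filter (fun v => ∀ j, ∃ m : ℕ, m ≤ l j ∧ v j = i j + (m : ZMod L))

/-- The parity of a hyper-square of the tiling: parity of the sum of the last `d - r`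
coordinates of its starting node. -/
def tpar (d L r : ℕ) (i : TorusV d L) : ℕ :=
  (∑ j ∈ Finset.univ.filter (fun j : Fin d => r ≤ (j : ℕ)), (i j).val) % 2

/-- A hyper-square of the tiling (start `i`, coordinate set = first `r` coordinates) is
occupied: its even-part is fully black if its parity is even, and its odd-part is fully
black if its parity is odd. -/
noncomputable def occupiedHS (d L r : ℕ) (i : TorusV d L) (C : TorusV d L → Bool) : Prop :=
  if tpar d L r i = 0 then
    ∀ v ∈ evenPart i (Finset.univ.filter (fun j : Fin d => (j : ℕ) < r)), C v = true
  else
    ∀ v ∈ oddPart i (Finset.univ.filter (fun j : Fin d => (j : ℕ) < r)), C v = true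

/-- The Bernoulli measure on `Bool` with success (black) probability `p` (clamped to `1`). -/
noncomputable def bernoulliMeasure (p : ℝ≥0∞) : Measure Bool :=
  (PMF.ofFintype (fun b => cond b (min p 1) (1 - min p 1))
    (by rw [Fintype.sum_bool]; exact add_tsub_cancel_of_le (min_le_right _ _))).toMeasure

/-- The product measure on configurations: each node is independently black with
probability `p`. -/
noncomputable def productMeasure (V : Type*) [Fintype V] (p : ℝ≥0∞) :
    Measure (V → Bool) :=
  Measure.pi (fun _ : V => bernoulliMeasure p)

section Aux

variable {d L : ℕ}

/-- Flip membership of `j` in `S`. -/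
noncomputable def flipS (S : Finset (Fin d)) (j : Fin d) : Finset (Fin d) :=
  if j ∈ S then S.erase j else insert j S

lemma one_ne_zero_zmod (hL : 4 ≤ L) : (1 : ZMod L) ≠ 0 := by
  haveI : Fact (1 < L) := ⟨by omega⟩
  exact one_ne_zero

lemma hsNode_inj (hL : 4 ≤ L) (i : TorusV d L) {S T : Finset (Fin d)}
    (h : hsNode i S = hsNode i T) : S = T := by
  have h1 : (1 : ZMod L) ≠ 0 := one_ne_zero_zmod hL
  ext j
  have hj := congrFun h j
  simp only [hsNode] at hj
  constructor <;> intro hm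
  · by_contra hT
    rw [if_pos hm, if_neg hT] at hj
    exact h1 (by linear_combination hj)
  · by_contra hS
    rw [if_neg hS, if_pos hm] at hj
    exact h1 (by linear_combination -hj)

lemma flipS_ne (S : Finset (Fin d)) (j : Fin d) : flipS S j ≠ S := by
  unfold flipS
  split <;> intro h
  · exact absurd (h ▸ Finset.notMem_erase j S) (by simpa using ‹j ∈ S›)
  · exact ‹j ∉ S› (h ▸ Finset.mem_insert_self j S)

lemma mem_flipS_self {S : Finset (Fin d)} {j : Fin d} : j ∈ flipS S j ↔ j ∉ S := by
  unfold flipS; split <;> simp_all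

lemma mem_flipS_other {S : Finset (Fin d)} {j k : Fin d} (h : k ≠ j) :
    k ∈ flipS S j ↔ k ∈ S := by
  unfold flipS; split <;> simp [h]

lemma flipS_subset {S J : Finset (Fin d)} {j : Fin d} (hS : S ⊆ J) (hj : j ∈ J) :
    flipS S j ⊆ J := by
  unfold flipS; split
  · exact (Finset.erase_subset j S).trans hS
  · exact Finset.insert_subset hj hS

lemma flipS_card_mod {S : Finset (Fin d)} {j : Fin d} :
    (flipS S j).card % 2 ≠ S.card % 2 := by
  unfold flipS; split
  · rw [Finset.card_erase_of_mem ‹_›]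
    have : 1 ≤ S.card := Finset.card_pos.mpr ⟨j, ‹_›⟩
    omega
  · rw [Finset.card_insert_of_notMem ‹_›]
    omega

lemma adj_flip (hL : 4 ≤ L) (i : TorusV d L) (S : Finset (Fin d)) (j : Fin d) :
    (torusGraph d L).Adj (hsNode i S) (hsNode i (flipS S j)) := by
  refine ⟨fun h => flipS_ne S j (hsNode_inj hL i h.symm), j, ?_, fun k hk => ?_⟩
  · by_cases hj : j ∈ S
    · right
      have h1 : j ∉ flipS S j := by rw [mem_flipS_self]; simp [hj]
      simp only [hsNode, h1, hj, if_false, if_true]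
      ring
    · left
      have h1 : j ∈ flipS S j := mem_flipS_self.mpr hj
      simp [hsNode, h1, hj]
  · simp only [hsNode, mem_flipS_other hk]

lemma step_lemma {r : ℕ} [NeZero L] (hL : 4 ≤ L) (i : TorusV d L) {J : Finset (Fin d)}
    (hJ : J.card = r) (C : TorusV d L → Bool) (e : ℕ) (he : e < 2)
    (hC : ∀ S ⊆ J, S.card % 2 = e → C (hsNode i S) = true) :
    ∀ S ⊆ J, S.card % 2 ≠ e → gStep (torusGraph d L) r C (hsNode i S) = true := by
  intro S hS hpar
  have key : r ≤ (Finset.univ.filter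
      (fun u => (torusGraph d L).Adj (hsNode i S) u ∧ C u = true)).card := by
    rw [← hJ]
    apply Finset.card_le_card_of_injOn (fun j => hsNode i (flipS S j))
    · intro j hj
      simp only [Finset.coe_filter, Set.mem_setOf_eq, Finset.mem_coe, Finset.mem_filter, Finset.mem_univ, true_and]
      refine ⟨adj_flip hL i S j, ?_⟩
      apply hC _ (flipS_subset hS hj)
      have := @flipS_card_mod d S j
      omega
    · intro j₁ hj₁ j₂ hj₂ h
      have heq : flipS S j₁ = flipS S j₂ := hsNode_inj hL i h
      by_contra hne
      have h1 : j₁ ∈ flipS S j₁ ↔ j₁ ∉ S := mem_flipS_self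
      have h2 : j₁ ∈ flipS S j₂ ↔ j₁ ∈ S := mem_flipS_other hne
      rw [heq] at h1
      tauto
  simp only [gStep, decide_eq_true_eq]
  exact key

lemma mem_evenPart {i : TorusV d L} {J : Finset (Fin d)} {v : TorusV d L} :
    v ∈ evenPart i J ↔ ∃ S, S ⊆ J ∧ Even S.card ∧ hsNode i S = v := by
  simp only [evenPart, Finset.mem_image, Finset.mem_filter, Finset.mem_powerset]
  tauto

lemma mem_oddPart {i : TorusV d L} {J : Finset (Fin d)} {v : TorusV d L} :
    v ∈ oddPart i J ↔ ∃ S, S ⊆ J ∧ Odd S.card ∧ hsNode i S = v := by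
  simp only [oddPart, Finset.mem_image, Finset.mem_filter, Finset.mem_powerset]
  tauto

end Aux

theorem stmt_1 (d L r : ℕ) [NeZero L] (hL : 4 ≤ L) (hr : 2 ≤ r) (hrd : r ≤ d)
    (i : TorusV d L) (J : Finset (Fin d)) (hJ : J.card = r)
    (C : TorusV d L → Bool) (hC : ∀ v ∈ evenPart i J, C v = true) :
    (∀ t, ∃ v, (gStep (torusGraph d L) r)^[t] C v = true) ∧
    (∀ t' : ℕ,
      (∀ v ∈ evenPart i J, (gStep (torusGraph d L) r)^[2 * t'] C v = true) ∧
      (∀ v ∈ oddPart i J, (gStep (torusGraph d L) r)^[2 * t' + 1] C v = true)) := by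
  set f := gStep (torusGraph d L) r with hf
  -- key induction: at even times the even part is black, at odd times the odd part is black
  have main : ∀ t' : ℕ,
      (∀ S ⊆ J, S.card % 2 = 0 → f^[2 * t'] C (hsNode i S) = true) ∧
      (∀ S ⊆ J, S.card % 2 = 1 → f^[2 * t' + 1] C (hsNode i S) = true) := by
    intro t'
    induction t' with
    | zero =>
      constructor
      · intro S hS hpar
        simp only [Nat.mul_zero, Function.iterate_zero, id_eq]
        exact hC _ (mem_evenPart.mpr ⟨S, hS, Nat.even_iff.mpr hpar, rfl⟩)
      · intro S hS hpar
        have heven : ∀ T ⊆ J, T.card % 2 = 0 → f^[0] C (hsNode i T) = true := by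
          intro T hT hp
          exact hC _ (mem_evenPart.mpr ⟨T, hT, Nat.even_iff.mpr hp, rfl⟩)
        simp only [Nat.mul_zero, Nat.zero_add, Function.iterate_one]
        exact step_lemma hL i hJ (f^[0] C) 0 (by omega) heven S hS (by omega)
    | succ n ih =>
      have hodd : ∀ S ⊆ J, S.card % 2 = 1 → f^[2 * n + 1] C (hsNode i S) = true := ih.2
      have heven : ∀ S ⊆ J, S.card % 2 = 0 → f^[2 * n + 2] C (hsNode i S) = true := by
        intro S hS hpar
        have := step_lemma hL i hJ (f^[2 * n + 1] C) 1 (by omega) hodd S hS (by omega)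
        rw [← hf] at this
        rwa [Function.iterate_succ_apply']
      constructor
      · intro S hS hpar
        have : 2 * (n + 1) = 2 * n + 2 := by ring
        rw [this]
        exact heven S hS hpar
      · intro S hS hpar
        have h3 : 2 * (n + 1) + 1 = (2 * n + 2) + 1 := by ring
        rw [h3]
        have := step_lemma hL i hJ (f^[2 * n + 2] C) 0 (by omega) heven S hS (by omega)
        rw [← hf] at this
        rwa [Function.iterate_succ_apply']
  have hJne : J.Nonempty := Finset.card_pos.mp (by omega)
  obtain ⟨j, hj⟩ := hJne
  constructor
  · intro t
    rcases Nat.even_or_odd t with ⟨k, hk⟩ | ⟨k, hk⟩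
    · refine ⟨hsNode i ∅, ?_⟩
      have := (main k).1 ∅ (Finset.empty_subset J) (by simp)
      rwa [show 2 * k = t by omega] at this
    · refine ⟨hsNode i {j}, ?_⟩
      have := (main k).2 {j} (Finset.singleton_subset_iff.mpr hj) (by simp)
      rwa [show 2 * k + 1 = t by omega] at this
  · intro t'
    constructor
    · intro v hv
      obtain ⟨S, hS, hev, rfl⟩ := mem_evenPart.mp hv
      exact (main t').1 S hS (Nat.even_iff.mp hev)
    · intro v hv
      obtain ⟨S, hS, hod, rfl⟩ := mem_oddPart.mp hv
      exact (main t').2 S hS (Nat.odd_iff.mp hod)
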